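/- Let A, B be disjoint sets with |A| = |B| = m, m large, in a red-blue colored complete 3-uniform hypergraph, and suppose every vertex of A has degree at least 0.9m in the graph G(A,B) where a,a' ∈ A are adjacent iff at least 0.99m vertices b ∈ B make the triple a a' b red. Suppose additionally that all triples inside A are red. Then there is a red tight path on at least ⌊3(m-4)/2⌋ - 1 vertices alternating two vertices of A and one of B, i.e., of the form a_1 a_2 b_1 a_3 a_4 b_2 ... where consecutive triples along the sequence are red. -/

import Mathlib

open Finset

namespace RTP

set_option linter.unusedSectionVars false

variable {α : Type} [DecidableEq α]

lemma getD_eq (l : List α) (x0 : α) {i : ℕ} (h : i < l.length) :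
    l.getD i x0 = l[i]'h := List.getD_eq_getElem l x0 h

lemma getD_mem (l : List α) (x0 : α) {i : ℕ} (h : i < l.length) :
    l.getD i x0 ∈ l := by
  rw [getD_eq l x0 h]; exact List.getElem_mem _

lemma getD_head (l : List α) (x0 : α) (h : l ≠ []) : l.getD 0 x0 = l.head h := by
  rw [getD_eq l x0 (by simp [List.length_pos_iff.mpr h]), List.head_eq_getElem]

lemma getD_last (l : List α) (x0 : α) (h : l ≠ []) :
    l.getD (l.length - 1) x0 = l.getLast h := by
  have hp : 0 < l.length := List.length_pos_iff.mpr h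
  rw [getD_eq l x0 (by omega), List.getLast_eq_getElem]

lemma head?_eq_getD (l : List α) (x0 : α) (h : 0 < l.length) :
    l.head? = some (l.getD 0 x0) := by
  rw [List.head?_eq_getElem?, List.getElem?_eq_getElem h, getD_eq l x0 h]

lemma getLast?_eq_getD (l : List α) (x0 : α) (h : 0 < l.length) :
    l.getLast? = some (l.getD (l.length - 1) x0) := by
  rw [List.getLast?_eq_getElem?, List.getElem?_eq_getElem (by omega),
    getD_eq l x0 (by omega)]

lemma getD_append_left (l1 l2 : List α) (x0 : α) {i : ℕ} (h : i < l1.length) :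
    (l1 ++ l2).getD i x0 = l1.getD i x0 := by
  rw [getD_eq _ x0 (by simp; omega), getD_eq _ x0 h, List.getElem_append_left h]

lemma getD_append_right (l1 l2 : List α) (x0 : α) {i : ℕ} (h1 : l1.length ≤ i)
    (h2 : i < l1.length + l2.length) :
    (l1 ++ l2).getD i x0 = l2.getD (i - l1.length) x0 := by
  rw [getD_eq _ x0 (by simp; omega), getD_eq _ x0 (by omega),
    List.getElem_append_right h1]

lemma getD_take (l : List α) (x0 : α) {i j : ℕ} (h : j < i) (h2 : j < l.length) :
    (l.take i).getD j x0 = l.getD j x0 := by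
  rw [getD_eq _ x0 (by simp; omega), getD_eq _ x0 h2, List.getElem_take]

lemma getD_drop (l : List α) (x0 : α) {i j : ℕ} (h : i + j < l.length) :
    (l.drop i).getD j x0 = l.getD (i + j) x0 := by
  rw [getD_eq _ x0 (by simp; omega), getD_eq _ x0 h, List.getElem_drop]

lemma getD_reverse (l : List α) (x0 : α) {j : ℕ} (h : j < l.length) :
    l.reverse.getD j x0 = l.getD (l.length - 1 - j) x0 := by
  rw [getD_eq _ x0 (by simp; omega), getD_eq _ x0 (by omega), List.getElem_reverse]

lemma chain'_getD {adj : α → α → Prop} {l : List α} (h : l.IsChain adj) (x0 : α)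
    {i : ℕ} (hi : i + 1 < l.length) :
    adj (l.getD i x0) (l.getD (i+1) x0) := by
  rw [getD_eq _ x0 (by omega), getD_eq _ x0 hi]
  exact List.isChain_iff_getElem.mp h i (by omega)

lemma nodup_getD_inj {l : List α} (h : l.Nodup) (x0 : α) {i j : ℕ}
    (hi : i < l.length) (hj : j < l.length) (he : l.getD i x0 = l.getD j x0) :
    i = j := by
  rw [getD_eq _ x0 hi, getD_eq _ x0 hj] at he
  exact (List.Nodup.getElem_inj_iff h).mp he

lemma getD_indexOf (l : List α) (x0 : α) {w : α} (h : w ∈ l) :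
    l.getD (l.idxOf w) x0 = w := by
  rw [getD_eq _ x0 (List.idxOf_lt_length_iff.mpr h)]
  exact List.getElem_idxOf _

lemma extend_path (A : Finset α) (adj : α → α → Prop) [DecidableRel adj]
    (hsym : ∀ x y, adj x y → adj y x) (hirr : ∀ x, ¬ adj x x)
    (d : ℕ) (hdeg : ∀ a ∈ A, d ≤ (A.filter (adj a)).card)
    (hd : A.card ≤ 2 * d)
    (l : List α) (hlen : l.length < A.card) (hnd : l.Nodup)
    (hmem : ∀ x ∈ l, x ∈ A) (hch : l.IsChain adj) :
    ∃ l' : List α, l'.length = l.length + 1 ∧ l'.Nodup ∧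
      (∀ x ∈ l', x ∈ A) ∧ l'.IsChain adj := by
  classical
  rcases Nat.eq_zero_or_pos l.length with h0 | hpos
  · have hApos : 0 < A.card := by omega
    obtain ⟨a, ha⟩ := Finset.card_pos.mp hApos
    have hl0 : l = [] := List.eq_nil_of_length_eq_zero h0
    subst hl0
    exact ⟨[a], by simp, by simp, by simp [ha], by simp⟩
  have hne : l ≠ [] := List.ne_nil_of_length_pos hpos
  set g : ℕ → α := fun i => l.getD i (l.head hne) with hg
  have hv0 : g 0 = l.head hne := getD_head l _ hne
  have hvl : g (l.length - 1) = l.getLast hne := getD_last l _ hne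
  have hgmem : ∀ i, i < l.length → g i ∈ A := fun i h => hmem _ (getD_mem l _ h)
  have hginj : ∀ i j, i < l.length → j < l.length → g i = g j → i = j :=
    fun i j hi hj he => nodup_getD_inj hnd _ hi hj he
  have hgadj : ∀ i, i + 1 < l.length → adj (g i) (g (i+1)) :=
    fun i hi => chain'_getD hch _ hi
  have hv0l : g 0 ∈ l := getD_mem l _ hpos
  have hvll : g (l.length - 1) ∈ l := getD_mem l _ (by omega)
  -- case A : extend at the head
  by_cases hA : ∃ w ∈ A, w ∉ l ∧ adj w (g 0)
  · obtain ⟨w, hwA, hwl, hwadj⟩ := hA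
    refine ⟨w :: l, by simp, by simp [hnd, hwl], ?_, ?_⟩
    · intro x hx; rcases List.mem_cons.mp hx with h | h
      · exact h ▸ hwA
      · exact hmem _ h
    · rw [List.isChain_cons]
      refine ⟨?_, hch⟩
      intro y hy
      rw [head?_eq_getD l (l.head hne) hpos] at hy
      simp only [Option.mem_def, Option.some.injEq] at hy
      exact hy ▸ hwadj
  -- case B : extend at the end
  by_cases hB : ∃ w ∈ A, w ∉ l ∧ adj (g (l.length - 1)) w
  · obtain ⟨w, hwA, hwl, hwadj⟩ := hB
    refine ⟨l ++ [w], by simp, ?_, ?_, ?_⟩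
    · rw [List.nodup_append]
      refine ⟨hnd, by simp, ?_⟩
      intro x hx y hxw hxy
      simp only [List.mem_singleton] at hxw
      exact hwl (hxw ▸ hxy ▸ hx)
    · intro x hx; rcases List.mem_append.mp hx with h | h
      · exact hmem _ h
      · simp only [List.mem_singleton] at h; exact h ▸ hwA
    · rw [List.isChain_append]
      refine ⟨hch, by simp, ?_⟩
      intro x hx y hy
      simp only [List.head?_cons, Option.mem_def, Option.some.injEq] at hy
      rw [getLast?_eq_getD l (l.head hne) hpos] at hx
      simp only [Option.mem_def, Option.some.injEq] at hx
      rw [← hx, ← hy]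
      exact hwadj
  push_neg at hA hB
  -- all neighbours of the endpoints lie on l
  have hN0 : A.filter (adj (g 0)) ⊆ l.toFinset := by
    intro w hw
    simp only [Finset.mem_filter] at hw
    by_contra hwl
    exact hA w hw.1 (by simpa using hwl) (hsym _ _ hw.2)
  have hNl : A.filter (adj (g (l.length - 1))) ⊆ l.toFinset := by
    intro w hw
    simp only [Finset.mem_filter] at hw
    by_contra hwl
    exact hB w hw.1 (by simpa using hwl) hw.2
  have hcardl : l.toFinset.card = l.length := List.toFinset_card_of_nodup hnd
  have hnd1 : d + 1 ≤ l.length := by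
    have h1 : A.filter (adj (g 0)) ⊆ l.toFinset.erase (g 0) := by
      intro w hw
      refine Finset.mem_erase.mpr ⟨?_, hN0 hw⟩
      rintro rfl
      exact hirr _ (Finset.mem_filter.mp hw).2
    have h2 := Finset.card_le_card h1
    have h3 := Finset.card_erase_of_mem (List.mem_toFinset.mpr hv0l)
    have h4 := hdeg _ (hgmem 0 hpos)
    omega
  -- pigeonhole over indices
  set S1 := (Finset.range (l.length - 1)).filter (fun i => adj (g 0) (g (i+1))) with hS1
  set S2 := (Finset.range (l.length - 1)).filter
    (fun i => adj (g (l.length - 1)) (g i)) with hS2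
  have hidx : ∀ w ∈ l, g (l.idxOf w) = w := fun w hw => getD_indexOf l _ hw
  have hidxlt : ∀ w ∈ l, l.idxOf w < l.length :=
    fun w hw => List.idxOf_lt_length_iff.mpr hw
  have hcS1 : d ≤ S1.card := by
    refine le_trans (hdeg _ (hgmem 0 hpos)) (Finset.card_le_card_of_injOn
      (fun w => l.idxOf w - 1) ?_ ?_)
    · intro w hw
      have hwl : w ∈ l := List.mem_toFinset.mp (hN0 hw)
      have hwadj : adj (g 0) w := (Finset.mem_filter.mp hw).2
      have hj := hidxlt w hwl
      have hj0 : l.idxOf w ≠ 0 := by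
        intro h
        apply hirr (g 0)
        have := hidx w hwl
        rw [h] at this
        exact this ▸ hwadj
      simp only [hS1, Finset.mem_coe, Finset.mem_filter, Finset.mem_range]
      have heq : l.idxOf w - 1 + 1 = l.idxOf w := by omega
      rw [heq, hidx w hwl]
      exact ⟨by omega, hwadj⟩
    · intro w1 hw1 w2 hw2 heq
      simp only [Finset.mem_coe] at hw1 hw2
      have h1 : w1 ∈ l := List.mem_toFinset.mp (hN0 hw1)
      have h2 : w2 ∈ l := List.mem_toFinset.mp (hN0 hw2)
      have hj10 : l.idxOf w1 ≠ 0 := by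
        intro h
        apply hirr (g 0)
        have := hidx w1 h1
        rw [h] at this
        exact this ▸ (Finset.mem_filter.mp hw1).2
      have hj20 : l.idxOf w2 ≠ 0 := by
        intro h
        apply hirr (g 0)
        have := hidx w2 h2
        rw [h] at this
        exact this ▸ (Finset.mem_filter.mp hw2).2
      have heq' : l.idxOf w1 - 1 = l.idxOf w2 - 1 := heq
      have : l.idxOf w1 = l.idxOf w2 := by omega
      rw [← hidx w1 h1, ← hidx w2 h2, this]
  have hcS2 : d ≤ S2.card := by
    refine le_trans (hdeg _ (hgmem (l.length - 1) (by omega))) (Finset.card_le_card_of_injOn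
      (fun w => l.idxOf w) ?_ ?_)
    · intro w hw
      have hwl : w ∈ l := List.mem_toFinset.mp (hNl hw)
      have hwadj : adj (g (l.length - 1)) w := (Finset.mem_filter.mp hw).2
      have hj := hidxlt w hwl
      have hjn : l.idxOf w ≠ l.length - 1 := by
        intro h
        apply hirr (g (l.length - 1))
        have := hidx w hwl
        rw [h] at this
        exact this ▸ hwadj
      simp only [hS2, Finset.mem_coe, Finset.mem_filter, Finset.mem_range]
      rw [hidx w hwl]
      exact ⟨by omega, hwadj⟩
    · intro w1 hw1 w2 hw2 heq
      simp only [Finset.mem_coe] at hw1 hw2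
      have h1 : w1 ∈ l := List.mem_toFinset.mp (hNl hw1)
      have h2 : w2 ∈ l := List.mem_toFinset.mp (hNl hw2)
      have heq' : l.idxOf w1 = l.idxOf w2 := heq
      rw [← hidx w1 h1, ← hidx w2 h2, heq']
  have hinter : (S1 ∩ S2).Nonempty := by
    rw [← Finset.card_pos]
    have hsub : S1 ∪ S2 ⊆ Finset.range (l.length - 1) := by
      intro x hx
      rcases Finset.mem_union.mp hx with h | h
      · exact Finset.mem_of_mem_filter _ h
      · exact Finset.mem_of_mem_filter _ h
    have hu : (S1 ∪ S2).card ≤ l.length - 1 := by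
      have := Finset.card_le_card hsub
      rwa [Finset.card_range] at this
    have := Finset.card_union_add_card_inter S1 S2
    omega
  obtain ⟨i, hi⟩ := hinter
  rw [Finset.mem_inter] at hi
  have hi1 : i < l.length - 1 := Finset.mem_range.mp (Finset.mem_of_mem_filter _ hi.1)
  have hadj1 : adj (g 0) (g (i+1)) := (Finset.mem_filter.mp hi.1).2
  have hadj2 : adj (g (l.length - 1)) (g i) := (Finset.mem_filter.mp hi.2).2
  -- the cycle
  set c : List α := l.take (i+1) ++ (l.drop (i+1)).reverse with hc
  set gc : ℕ → α := fun j => c.getD j (l.head hne) with hgc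
  have htakelen : (l.take (i+1)).length = i + 1 := by simp; omega
  have hdroplen : (l.drop (i+1)).length = l.length - (i+1) := by simp
  have hclen : c.length = l.length := by simp [hc]; omega
  have hcperm : c.Perm l := by
    have h1 : (l.drop (i+1)).reverse.Perm (l.drop (i+1)) := List.reverse_perm _
    have h2 := List.Perm.append_left (l.take (i+1)) h1
    rw [hc]
    exact h2.trans (by rw [List.take_append_drop])
  have hcnd : c.Nodup := hcperm.nodup_iff.mpr hnd
  have hcmem : ∀ x, x ∈ c ↔ x ∈ l := fun x => hcperm.mem_iff
  have hgc_lt : ∀ j, j < i+1 → gc j = g j := by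
    intro j hj
    rw [hgc, hc]
    simp only
    rw [getD_append_left _ _ _ (by omega : j < (l.take (i+1)).length)]
    exact getD_take l _ hj (by omega)
  have hgc_ge : ∀ j, i+1 ≤ j → j < l.length → gc j = g (l.length - 1 - j + (i+1)) := by
    intro j hj hjn
    rw [hgc, hc]
    simp only
    rw [getD_append_right _ _ _ (by omega : (l.take (i+1)).length ≤ j)
      (by rw [htakelen]; simp; omega)]
    rw [htakelen]
    rw [getD_reverse _ _ (by rw [hdroplen]; omega)]
    rw [getD_drop _ _ (by rw [hdroplen]; omega)]
    congr 1
    rw [hdroplen]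
    omega
  have hchc : c.IsChain adj := by
    rw [hc, List.isChain_append]
    refine ⟨hch.prefix (List.take_prefix _ _), ?_, ?_⟩
    · rw [List.isChain_reverse]
      exact List.IsChain.imp (fun x y h => hsym x y h) (hch.suffix (List.drop_suffix _ _))
    · intro x hx y hy
      rw [getLast?_eq_getD _ (l.head hne) (by omega)] at hx
      simp only [Option.mem_def, Option.some.injEq] at hx
      have hx' : x = g i := by
        rw [← hx, htakelen]
        simp only [Nat.add_sub_cancel]
        exact getD_take l _ (by omega) (by omega)
      rw [List.head?_reverse, getLast?_eq_getD _ (l.head hne) (by rw [hdroplen]; omega)] at hy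
      simp only [Option.mem_def, Option.some.injEq] at hy
      have hy' : y = g (l.length - 1) := by
        rw [← hy, hdroplen, getD_drop _ _ (by omega)]
        congr 1
        omega
      rw [hx', hy']
      exact hsym _ _ hadj2
  have hgc0 : gc 0 = g 0 := hgc_lt 0 (by omega)
  have hgclast : gc (l.length - 1) = g (i+1) := by
    rw [hgc_ge (l.length - 1) (by omega) (by omega)]
    congr 1
    omega
  -- an outside vertex with a neighbour on the cycle
  have hsubA : l.toFinset ⊆ A := fun x hx => hmem x (List.mem_toFinset.mp hx)
  have hout : ∃ u ∈ A, u ∉ l.toFinset := by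
    by_contra h
    push_neg at h
    have := Finset.card_le_card h
    omega
  obtain ⟨u, huA, hul⟩ := hout
  have hunbr : ∃ w ∈ l, adj u w := by
    by_contra h
    push_neg at h
    have hsub : A.filter (adj u) ⊆ A \ l.toFinset := by
      intro w hw
      rw [Finset.mem_filter] at hw
      exact Finset.mem_sdiff.mpr ⟨hw.1, fun hwl => h w (List.mem_toFinset.mp hwl) hw.2⟩
    have h1 := Finset.card_le_card hsub
    have h2 : (A \ l.toFinset).card = A.card - l.length := by
      rw [Finset.card_sdiff_of_subset hsubA, hcardl]
    have := hdeg u huA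
    omega
  obtain ⟨w, hwl, huw⟩ := hunbr
  have hwc : w ∈ c := (hcmem w).mpr hwl
  have hjn : c.idxOf w < l.length := by
    have := List.idxOf_lt_length_iff.mpr hwc
    omega
  set j := c.idxOf w with hj
  have hcj : gc j = w := getD_indexOf c _ hwc
  set p : List α := u :: (c.drop j ++ c.take j) with hp
  have hq : (c.drop j ++ c.take j).Perm c := by
    have := List.perm_append_comm (l₁ := c.drop j) (l₂ := c.take j)
    exact this.trans (by rw [List.take_append_drop])
  have hqlen : (c.drop j ++ c.take j).length = l.length := by simp; omega
  have huc : u ∉ c := fun h => hul (List.mem_toFinset.mpr ((hcmem u).mp h))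
  have hctakelen : (c.take j).length = j := by simp; omega
  have hcdroplen : (c.drop j).length = l.length - j := by simp [hclen]
  refine ⟨p, by simp [hp]; omega, ?_, ?_, ?_⟩
  · rw [hp, List.nodup_cons]
    exact ⟨fun h => huc (hq.mem_iff.mp h), hq.nodup_iff.mpr hcnd⟩
  · intro x hx
    rcases List.mem_cons.mp hx with h | h
    · exact h ▸ huA
    · exact hmem _ ((hcmem x).mp (hq.mem_iff.mp h))
  · rw [hp, List.isChain_cons]
    constructor
    · intro y hy
      rw [head?_eq_getD _ (l.head hne) (by omega)] at hy
      simp only [Option.mem_def, Option.some.injEq] at hy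
      have : (c.drop j ++ c.take j).getD 0 (l.head hne) = w := by
        rw [getD_append_left _ _ _ (by omega : 0 < (c.drop j).length)]
        rw [getD_drop _ _ (by omega)]
        have h00 : j + 0 = j := rfl
        rw [h00]
        exact hcj
      rw [← hy, this]
      exact huw
    · rw [List.isChain_append]
      refine ⟨hchc.suffix (List.drop_suffix _ _), hchc.prefix (List.take_prefix _ _), ?_⟩
      intro x hx y hy
      rcases Nat.eq_zero_or_pos j with hj0 | hj0
      · rw [hj0] at hy; simp at hy
      rw [getLast?_eq_getD _ (l.head hne) (by omega)] at hx
      simp only [Option.mem_def, Option.some.injEq] at hx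
      have hx' : x = g (i+1) := by
        rw [← hx, hcdroplen, getD_drop _ _ (by omega), ← hgclast]
        congr 1
        omega
      rw [head?_eq_getD _ (l.head hne) (by omega)] at hy
      simp only [Option.mem_def, Option.some.injEq] at hy
      have hy' : y = g 0 := by
        rw [← hy, getD_take _ _ hj0 (by omega), ← hgc0]
      rw [hx', hy']
      exact hsym _ _ hadj1

lemma exists_path (A : Finset α) (adj : α → α → Prop) [DecidableRel adj]
    (hsym : ∀ x y, adj x y → adj y x) (hirr : ∀ x, ¬ adj x x)
    (d : ℕ) (hdeg : ∀ a ∈ A, d ≤ (A.filter (adj a)).card)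
    (hd : A.card ≤ 2 * d) :
    ∀ n, n ≤ A.card → ∃ l : List α, l.length = n ∧ l.Nodup ∧
      (∀ x ∈ l, x ∈ A) ∧ l.IsChain adj := by
  intro n
  induction n with
  | zero => exact fun _ => ⟨[], rfl, by simp, by simp, by simp⟩
  | succ n ih =>
    intro hn
    obtain ⟨l, hlen, hnd, hmem, hch⟩ := ih (by omega)
    obtain ⟨l', h1, h2, h3, h4⟩ := extend_path A adj hsym hirr d hdeg hd l (by omega)
      hnd hmem hch
    exact ⟨l', by omega, h2, h3, h4⟩

lemma greedy_pick (x0 : α) :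
    ∀ (n : ℕ) (Gs : ℕ → Finset α), (∀ q < n, n ≤ (Gs q).card) →
    ∃ b : ℕ → α, (∀ q < n, b q ∈ Gs q) ∧ ∀ q < n, ∀ q' < n, b q = b q' → q = q' := by
  intro n
  induction n with
  | zero => exact fun Gs _ => ⟨fun _ => x0, by omega, by omega⟩
  | succ n ih =>
    intro Gs hGs
    obtain ⟨b, hb1, hb2⟩ := ih Gs (fun q hq => le_trans (by omega) (hGs q (by omega)))
    have hns : ¬ (Gs n ⊆ (Finset.range n).image b) := by
      intro h
      have h1 := Finset.card_le_card h
      have h2 : ((Finset.range n).image b).card ≤ n :=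
        le_trans Finset.card_image_le (by simp)
      have := hGs n (by omega)
      omega
    obtain ⟨z, hz1, hz2⟩ := Finset.not_subset.mp hns
    refine ⟨fun q => if q = n then z else b q, ?_, ?_⟩
    · intro q hq
      by_cases h : q = n
      · simpa [h] using hz1
      · simpa [h] using hb1 q (by omega)
    · intro q hq q' hq' he
      simp only at he
      by_cases h : q = n <;> by_cases h' : q' = n
      · omega
      · rw [if_pos h, if_neg h'] at he
        exact absurd (Finset.mem_image.mpr ⟨q', Finset.mem_range.mpr (by omega), he.symm⟩) hz2
      · rw [if_neg h, if_pos h'] at he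
        exact absurd (Finset.mem_image.mpr ⟨q, Finset.mem_range.mpr (by omega), he⟩) hz2
      · rw [if_neg h, if_neg h'] at he
        exact hb2 q (by omega) q' (by omega) he

end RTP


/-- If `A`, `B` are disjoint `m`-sets (`m` large), every triple inside `A` is red, and every
vertex of `A` has degree at least `0.9m` in the graph `G(A,B)` (where `a, a'` are adjacent iff
at least `0.99m` vertices `b ∈ B` make `aa'b` red), then there is a red tight path on at least
`⌊3(m-4)/2⌋ - 1` vertices following the pattern `a₁ a₂ b₁ a₃ a₄ b₂ …`. -/
theorem red_tight_path_two_thirds_absorption :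
    ∃ m0 : ℕ, ∀ m : ℕ, m0 ≤ m →
      ∀ (α : Type) [DecidableEq α] (red : Finset α → Prop) [DecidablePred red]
        (A B : Finset α), Disjoint A B → A.card = m → B.card = m →
        (∀ e : Finset α, e ⊆ A → e.card = 3 → red e) →
        (∀ a ∈ A, (0.9 : ℝ) * m ≤
          ((A.filter fun a' => a' ≠ a ∧
            (0.99 : ℝ) * m ≤ ((B.filter fun b => red {a, a', b}).card : ℝ)).card : ℝ)) →
        ∃ (k : ℕ) (f : ℕ → α), 3 * (m - 4) / 2 - 1 ≤ k ∧
          (∀ i < k, ∀ j < k, f i = f j → i = j) ∧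
          (∀ i < k, if i % 3 = 2 then f i ∈ B else f i ∈ A) ∧
          (∀ i, i + 2 < k → red ({f i, f (i + 1), f (i + 2)} : Finset α)) := by
  classical
  refine ⟨100, ?_⟩
  intro m hm α _ red _ A B hdisj hA hB _hredA hdeg
  -- the auxiliary graph on `A`
  set N : α → α → Finset α := fun x y => B.filter (fun b => red {x, y, b}) with hN
  have hNB : ∀ x y, N x y ⊆ B := fun x y => Finset.filter_subset _ _
  have hNsymm : ∀ x y, N x y = N y x := by
    intro x y
    apply Finset.filter_congr
    intro b _
    rw [Finset.insert_comm]
  set adj : α → α → Prop :=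
    fun x y => x ∈ A ∧ y ∈ A ∧ x ≠ y ∧ ((0.99 : ℝ) * m ≤ ((N x y).card : ℝ)) with hadjdef
  haveI : DecidableRel adj := Classical.decRel _
  have hsym : ∀ x y, adj x y → adj y x := by
    rintro x y ⟨h1, h2, h3, h4⟩
    exact ⟨h2, h1, h3.symm, by rwa [hNsymm y x]⟩
  have hirr : ∀ x, ¬ adj x x := fun x h => h.2.2.1 rfl
  set d : ℕ := ⌈(0.9 : ℝ) * m⌉₊ with hd
  have hdeg' : ∀ a ∈ A, d ≤ (A.filter (adj a)).card := by
    intro a haA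
    have h1 := hdeg a haA
    have h2 : (A.filter fun a' => a' ≠ a ∧
        (0.99 : ℝ) * m ≤ ((B.filter fun b => red {a, a', b}).card : ℝ))
        = A.filter (adj a) := by
      apply Finset.filter_congr
      intro x hxA
      constructor
      · rintro ⟨hne, hc⟩
        exact ⟨haA, hxA, fun h => hne h.symm, hc⟩
      · rintro ⟨_, _, hne, hc⟩
        exact ⟨fun h => hne h.symm, hc⟩
    rw [h2] at h1
    exact Nat.ceil_le.mpr h1
  have hdm : A.card ≤ 2 * d := by
    rw [hA]
    have h1 : (0.9 : ℝ) * m ≤ (d : ℝ) := Nat.le_ceil _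
    have h2 : (m : ℝ) ≤ ((2 * d : ℕ) : ℝ) := by push_cast; nlinarith [Nat.cast_nonneg (α := ℝ) m]
    exact_mod_cast h2
  -- a Hamiltonian path in the graph
  obtain ⟨l, hllen, hlnd, hlmem, hlch⟩ :=
    RTP.exists_path A adj hsym hirr d hdeg' hdm m (by rw [hA])
  have hne : l ≠ [] := by
    intro h
    rw [h] at hllen
    simp at hllen
    omega
  set a : ℕ → α := fun i => l.getD i (l.head hne) with ha
  have hamem : ∀ i, i < m → a i ∈ A := by
    intro i hi
    exact hlmem _ (RTP.getD_mem l _ (by omega))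
  have hainj : ∀ i j, i < m → j < m → a i = a j → i = j := by
    intro i j hi hj he
    exact RTP.nodup_getD_inj hlnd _ (by omega) (by omega) he
  have haadj : ∀ i, i + 1 < m → adj (a i) (a (i + 1)) := by
    intro i hi
    exact RTP.chain'_getD hlch _ (by omega)
  have haedge : ∀ i, i + 1 < m → (0.99 : ℝ) * m ≤ ((N (a i) (a (i + 1))).card : ℝ) :=
    fun i hi => (haadj i hi).2.2.2
  -- greedily pick the `B`-vertices
  set nb : ℕ := (m - 4) / 2 with hnb
  set Gs : ℕ → Finset α := fun q =>
    N (a (2*q)) (a (2*q+1)) ∩ N (a (2*q+1)) (a (2*q+2)) ∩ N (a (2*q+2)) (a (2*q+3)) with hGs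
  have hGsubB : ∀ q, Gs q ⊆ B := by
    intro q x hx
    simp only [hGs, Finset.mem_inter] at hx
    exact hNB _ _ hx.1.1
  have hcap : ∀ s t : Finset α, s ⊆ B → t ⊆ B →
      (s.card : ℝ) + (t.card : ℝ) - m ≤ ((s ∩ t).card : ℝ) := by
    intro s t hs ht
    have h1 : (s ∪ t).card ≤ m := by
      rw [← hB]
      exact Finset.card_le_card (Finset.union_subset hs ht)
    have h2 := Finset.card_union_add_card_inter s t
    have h3 : ((s ∪ t).card : ℝ) + ((s ∩ t).card : ℝ) = (s.card : ℝ) + (t.card : ℝ) := by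
      exact_mod_cast congrArg (Nat.cast : ℕ → ℝ) h2
    have h4 : ((s ∪ t).card : ℝ) ≤ (m : ℝ) := by exact_mod_cast h1
    linarith
  have hGcard : ∀ q, q < nb → nb ≤ (Gs q).card := by
    intro q hq
    have hqm : 2 * q + 4 ≤ m := by omega
    have e1 := haedge (2*q) (by omega)
    have e2 := haedge (2*q+1) (by omega)
    have e3 := haedge (2*q+2) (by omega)
    have c12 := hcap _ _ (hNB (a (2*q)) (a (2*q+1))) (hNB (a (2*q+1)) (a (2*q+2)))
    have hsub12 : N (a (2*q)) (a (2*q+1)) ∩ N (a (2*q+1)) (a (2*q+2)) ⊆ B :=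
      fun x hx => hNB _ _ (Finset.mem_inter.mp hx).1
    have c123 := hcap _ _ hsub12 (hNB (a (2*q+2)) (a (2*q+3)))
    have h2a : 2*q+1+1 = 2*q+2 := by omega
    have h2b : 2*q+2+1 = 2*q+3 := by omega
    rw [h2a] at e2
    rw [h2b] at e3
    have hGval : ((Gs q).card : ℝ) ≥ (0.97 : ℝ) * m := by
      simp only [hGs]
      have hm0 : (0:ℝ) ≤ (m:ℝ) := Nat.cast_nonneg m
      nlinarith [c12, c123, e1, e2, e3]
    have hnb2 : 2 * nb ≤ m := by omega
    have hnbr : (nb : ℝ) ≤ ((Gs q).card : ℝ) := by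
      have : (2 * nb : ℝ) ≤ (m : ℝ) := by exact_mod_cast hnb2
      nlinarith [Nat.cast_nonneg (α := ℝ) m]
    exact_mod_cast hnbr
  obtain ⟨b, hbmem, hbinj⟩ := RTP.greedy_pick (l.head hne) nb Gs hGcard
  have hbB : ∀ q, q < nb → b q ∈ B := fun q hq => hGsubB q (hbmem q hq)
  -- assemble the tight path
  set k : ℕ := 3 * (m - 4) / 2 - 1 with hk
  set f : ℕ → α := fun i => if i % 3 = 2 then b (i / 3) else a (2 * (i / 3) + i % 3) with hf
  have hf0 : ∀ q, f (3 * q) = a (2 * q) := by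
    intro q
    have h1 : (3 * q) % 3 = 0 := by omega
    have h2 : (3 * q) / 3 = q := by omega
    simp only [hf, h1, h2]
    norm_num
  have hf1 : ∀ q, f (3 * q + 1) = a (2 * q + 1) := by
    intro q
    have h1 : (3 * q + 1) % 3 = 1 := by omega
    have h2 : (3 * q + 1) / 3 = q := by omega
    simp only [hf, h1, h2]
    norm_num
  have hf2 : ∀ q, f (3 * q + 2) = b q := by
    intro q
    have h1 : (3 * q + 2) % 3 = 2 := by omega
    have h2 : (3 * q + 2) / 3 = q := by omega
    simp only [hf, h1, h2]
    norm_num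
  -- index bounds
  have hbound1 : ∀ i, i < k → i % 3 = 2 → i / 3 < nb := by intro i h1 h2; omega
  have hbound2 : ∀ i, i < k → i % 3 ≠ 2 → 2 * (i / 3) + i % 3 < m := by
    intro i h1 h2; omega
  refine ⟨k, f, le_refl _, ?_, ?_, ?_⟩
  · -- injectivity
    intro i hi j hj he
    by_cases h2i : i % 3 = 2 <;> by_cases h2j : j % 3 = 2
    · simp only [hf, if_pos h2i, if_pos h2j] at he
      have := hbinj (i/3) (hbound1 i hi h2i) (j/3) (hbound1 j hj h2j) he
      omega
    · simp only [hf, if_pos h2i, if_neg h2j] at he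
      have hmemB := hbB (i/3) (hbound1 i hi h2i)
      have hmemA := hamem _ (hbound2 j hj h2j)
      rw [he] at hmemB
      exact absurd hmemA (Finset.disjoint_right.mp hdisj hmemB)
    · simp only [hf, if_neg h2i, if_pos h2j] at he
      have hmemB := hbB (j/3) (hbound1 j hj h2j)
      have hmemA := hamem _ (hbound2 i hi h2i)
      rw [← he] at hmemB
      exact absurd hmemA (Finset.disjoint_right.mp hdisj hmemB)
    · simp only [hf, if_neg h2i, if_neg h2j] at he
      have := hainj _ _ (hbound2 i hi h2i) (hbound2 j hj h2j) he
      omega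
  · -- membership pattern
    intro i hi
    by_cases h2 : i % 3 = 2
    · rw [if_pos h2]
      simp only [hf, if_pos h2]
      exact hbB _ (hbound1 i hi h2)
    · rw [if_neg h2]
      simp only [hf, if_neg h2]
      exact hamem _ (hbound2 i hi h2)
  · -- red triples
    intro i hik
    have h3 : i % 3 = 0 ∨ i % 3 = 1 ∨ i % 3 = 2 := by omega
    rcases h3 with h | h | h
    · obtain ⟨q, rfl⟩ : ∃ q, i = 3 * q := ⟨i / 3, by omega⟩
      have hqnb : q < nb := by omega
      rw [hf0 q, hf1 q, hf2 q]
      have hb' := hbmem q hqnb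
      simp only [hGs, Finset.mem_inter] at hb'
      have := Finset.mem_filter.mp hb'.1.1
      exact this.2
    · obtain ⟨q, rfl⟩ : ∃ q, i = 3 * q + 1 := ⟨i / 3, by omega⟩
      have hqnb : q < nb := by omega
      have r1 : 3 * q + 1 + 1 = 3 * q + 2 := by omega
      have r2 : 3 * q + 1 + 2 = 3 * (q + 1) := by omega
      rw [r1, r2, hf1 q, hf2 q, hf0 (q+1)]
      have r3 : 2 * (q + 1) = 2 * q + 2 := by omega
      rw [r3]
      have hb' := hbmem q hqnb
      simp only [hGs, Finset.mem_inter] at hb'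
      have hred := (Finset.mem_filter.mp hb'.1.2).2
      have hset : ({a (2*q+1), b q, a (2*q+2)} : Finset α)
          = {a (2*q+1), a (2*q+2), b q} := by
        ext z; simp; tauto
      rw [hset]
      exact hred
    · obtain ⟨q, rfl⟩ : ∃ q, i = 3 * q + 2 := ⟨i / 3, by omega⟩
      have hqnb : q < nb := by omega
      have r1 : 3 * q + 2 + 1 = 3 * (q + 1) := by omega
      have r2 : 3 * q + 2 + 2 = 3 * (q + 1) + 1 := by omega
      rw [r1, r2, hf2 q, hf0 (q+1), hf1 (q+1)]
      have r3 : 2 * (q + 1) = 2 * q + 2 := by omega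
      have r4 : 2 * (q + 1) + 1 = 2 * q + 3 := by omega
      rw [r4, r3]
      have hb' := hbmem q hqnb
      simp only [hGs, Finset.mem_inter] at hb'
      have hred := (Finset.mem_filter.mp hb'.2).2
      have hset : ({b q, a (2*q+2), a (2*q+3)} : Finset α)
          = {a (2*q+2), a (2*q+3), b q} := by
        ext z; simp; tauto
      rw [hset]
      exact hred
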